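/- Let (X,d) be a metric space, and define the local compactness functional ν : X → [0,∞) by ν(x) = sup{ε > 0 : the closure of B(x,ε) is compact} if x has a compact neighborhood, and ν(x) = 0 otherwise; call a nonempty closed subset A of X almost nowhere locally compact if for every ε > 0 the set {a ∈ A : ν(a) ≥ ε} is compact, and call (X,d) cofinally complete if every cofinally Cauchy sequence in X has a cluster point. Then the following are equivalent: (a) (X,d) is cofinally complete; (b) for every metric space (Y,ρ), every continuous function f : (X,d) → (Y,ρ) is strongly uniformly continuous on each almost nowhere locally compact subset of X; (c) for every metric space (Y,ρ) and every continuous function f : (X,d) → (Y,ρ), whenever A is an almost nowhere locally compact subset of X and B is any nonempty subset of X with gap D_d(A,B) = inf{d(a,b) : a ∈ A, b ∈ B} = 0, then D_ρ(f(A), f(B)) = 0. -/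

import Mathlib

universe u v

open Filter Topology

/-- The local compactness functional: `nu x` is the supremum of the radii `ε > 0` such that
the closure of the ball `B(x, ε)` is compact (and `0` if there is no such radius, i.e. if
`x` has no compact neighborhood). -/
noncomputable def nu {X : Type u} [MetricSpace X] (x : X) : ENNReal :=
  ⨆ ε ∈ {ε : ℝ | 0 < ε ∧ IsCompact (closure (Metric.ball x ε))}, ENNReal.ofReal ε

/-- A nonempty closed subset `A` is almost nowhere locally compact if for every `ε > 0`
the set `{a ∈ A | nu a ≥ ε}` is compact. -/
def ANLC {X : Type u} [MetricSpace X] (A : Set X) : Prop :=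
  A.Nonempty ∧ IsClosed A ∧
    ∀ ε : ℝ, 0 < ε → IsCompact {a ∈ A | ENNReal.ofReal ε ≤ nu a}

/-- A sequence is cofinally Cauchy if for every `ε > 0` there is an infinite set of indices
whose terms are pairwise within `ε` of each other. -/
def CofinallyCauchy {X : Type u} [MetricSpace X] (u : ℕ → X) : Prop :=
  ∀ ε : ℝ, 0 < ε → ∃ S : Set ℕ, S.Infinite ∧ ∀ m ∈ S, ∀ n ∈ S, dist (u m) (u n) < ε

/-- A metric space is cofinally complete if every cofinally Cauchy sequence clusters. -/
def CofinallyComplete (X : Type u) [MetricSpace X] : Prop :=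
  ∀ u : ℕ → X, CofinallyCauchy u → ∃ p : X, MapClusterPt p atTop u

/-- The gap between two subsets of a metric space, computed with `edist`. -/
noncomputable def setGap {X : Type u} [MetricSpace X] (A B : Set X) : ENNReal :=
  ⨅ a ∈ A, ⨅ b ∈ B, edist a b

/-- `f` is strongly uniformly continuous on `B` if for every `ε > 0` there is a `δ > 0` such
that whenever `dist x y < δ` and `{x, y} ∩ B ≠ ∅`, we have `dist (f x) (f y) < ε`. -/
def StrongUnifContOn {X : Type u} {Y : Type v} [MetricSpace X] [MetricSpace Y]
    (f : X → Y) (B : Set X) : Prop :=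
  ∀ ε > (0 : ℝ), ∃ δ > (0 : ℝ), ∀ x y : X,
    dist x y < δ → (x ∈ B ∨ y ∈ B) → dist (f x) (f y) < ε

section Helpers

variable {X : Type u} [MetricSpace X]

/-- Metric characterization of cluster points of sequences. -/
lemma mapClusterPt_seq_iff {u : ℕ → X} {p : X} :
    MapClusterPt p atTop u ↔ ∀ ε : ℝ, 0 < ε → ∀ N : ℕ, ∃ n ≥ N, dist (u n) p < ε := by
  rw [mapClusterPt_iff_frequently]
  constructor
  · intro h ε hε N
    have := h (Metric.ball p ε) (Metric.ball_mem_nhds p hε)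
    rw [frequently_atTop] at this
    obtain ⟨n, hn, hn'⟩ := this N
    exact ⟨n, hn, by simpa [Metric.mem_ball] using hn'⟩
  · intro h s hs
    obtain ⟨ε, hε, hball⟩ := Metric.mem_nhds_iff.mp hs
    rw [frequently_atTop]
    intro N
    obtain ⟨n, hn, hlt⟩ := h ε hε N
    exact ⟨n, hn, hball (by simpa [Metric.mem_ball] using hlt)⟩

lemma infinite_of_forall_exists_ge {s : Set ℕ} (h : ∀ N, ∃ m ≥ N, m ∈ s) : s.Infinite := by
  by_contra hf
  rw [Set.not_infinite] at hf
  obtain ⟨b, hb⟩ := hf.bddAbove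
  obtain ⟨m, hm, hms⟩ := h (b + 1)
  exact absurd (hb hms) (by omega)

lemma div_cast_lt {a ε : ℝ} (hε : 0 < ε) {n : ℕ} (h : a / ε < (n : ℝ) + 1) :
    a / ((n : ℝ) + 1) < ε := by
  rw [div_lt_iff₀ hε] at h
  rw [div_lt_iff₀ (by positivity)]
  nlinarith

lemma cluster_of_infinite_in_compact {u : ℕ → X} {S : Set ℕ} (hS : S.Infinite) {K : Set X}
    (hK : IsCompact K) (hmem : ∀ m ∈ S, u m ∈ K) : ∃ p, MapClusterPt p atTop u := by
  set e := Set.Infinite.natEmbedding S hS with he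
  obtain ⟨p, -, φ, hφ, hten⟩ :=
    hK.tendsto_subseq (x := fun i => u (e i)) (fun i => hmem _ (e i).2)
  have hinj : Function.Injective (fun i : ℕ => ((e (φ i) : ℕ))) := by
    intro i j hij
    exact hφ.injective (e.injective (Subtype.val_injective hij))
  exact ⟨p, MapClusterPt.of_comp (p := atTop) hinj.nat_tendsto_atTop hten.mapClusterPt⟩

lemma isClosed_subset_range {u : ℕ → X} (hu : ∀ p : X, ¬ MapClusterPt p atTop u)
    {C : Set X} (hC : C ⊆ Set.range u) : IsClosed C := by
  classical
  refine isClosed_of_closure_subset fun p hp => ?_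
  by_contra hpC
  apply hu p
  rw [mapClusterPt_seq_iff]
  intro ε hε N
  obtain ⟨δ, hδpos, hδle, hδlt⟩ : ∃ δ : ℝ, 0 < δ ∧ δ ≤ ε ∧
      ∀ m < N, u m ≠ p → δ ≤ dist (u m) p := by
    set T := (Finset.range N).filter (fun m => u m ≠ p) with hT
    rcases T.eq_empty_or_nonempty with hTe | hTne
    · refine ⟨ε, hε, le_rfl, fun m hm hne => ?_⟩
      have hmem : m ∈ T := Finset.mem_filter.mpr ⟨Finset.mem_range.mpr hm, hne⟩
      rw [hTe] at hmem
      exact absurd hmem (Finset.notMem_empty m)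
    · refine ⟨min ε (T.inf' hTne fun m => dist (u m) p), lt_min hε ?_, min_le_left _ _,
        fun m hm hne => le_trans (min_le_right _ _) (Finset.inf'_le _ ?_)⟩
      · rw [Finset.lt_inf'_iff]
        intro m hm
        have : u m ≠ p := (Finset.mem_filter.mp hm).2
        exact dist_pos.mpr this
      · simp [hT, Finset.mem_filter, Finset.mem_range, hm, hne]
  obtain ⟨x, hxC, hxd⟩ := Metric.mem_closure_iff.mp hp δ hδpos
  obtain ⟨m, rfl⟩ := hC hxC
  have hump : u m ≠ p := fun h => hpC (h ▸ hxC)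
  have hdm : dist (u m) p < δ := by rwa [dist_comm] at hxd
  refine ⟨m, ?_, lt_of_lt_of_le hdm hδle⟩
  by_contra hmN
  push_neg at hmN
  exact absurd hdm (not_lt.mpr (hδlt m hmN hump))

lemma ennreal_eq_zero_of_forall {c : ENNReal} (h : ∀ ε : ℝ, 0 < ε → c < ENNReal.ofReal ε) :
    c = 0 := by
  by_contra hc
  rcases eq_or_ne c ⊤ with rfl | htop
  · exact absurd (h 1 one_pos) (by simp)
  · have h1 : 0 < c.toReal := ENNReal.toReal_pos hc htop
    have := h c.toReal h1
    rw [ENNReal.ofReal_toReal htop] at this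
    exact lt_irrefl _ this

lemma setGap_lt {A B : Set X} {c : ENNReal} (hc : setGap A B < c) :
    ∃ a ∈ A, ∃ b ∈ B, edist a b < c := by
  simpa [setGap, iInf_lt_iff] using hc

lemma setGap_le {A B : Set X} {a b : X} (ha : a ∈ A) (hb : b ∈ B) :
    setGap A B ≤ edist a b := by
  simp only [setGap]
  exact iInf₂_le_of_le a ha (iInf₂_le b hb)

lemma le_nu {x : X} {r : ℝ} (hr : 0 < r) (hc : IsCompact (closure (Metric.ball x r))) :
    ENNReal.ofReal r ≤ nu x :=
  le_iSup₂ (f := fun (ε : ℝ) (_ : ε ∈ {ε : ℝ | 0 < ε ∧ IsCompact (closure (Metric.ball x ε))})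
    => ENNReal.ofReal ε) r ⟨hr, hc⟩

lemma exists_of_lt_nu {x : X} {c : ENNReal} (h : c < nu x) :
    ∃ r : ℝ, 0 < r ∧ IsCompact (closure (Metric.ball x r)) ∧ c < ENNReal.ofReal r := by
  simp only [nu, lt_iSup_iff, Set.mem_setOf_eq, exists_prop] at h
  obtain ⟨r, ⟨hr, hc'⟩, hlt⟩ := h
  exact ⟨r, hr, hc', hlt⟩

lemma exists_bad_seq {c : X} {r : ℝ} (h : ¬ IsCompact (closure (Metric.ball c r))) :
    ∃ y : ℕ → X, (∀ k, y k ∈ closure (Metric.ball c r)) ∧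
      ∀ p : X, ¬ MapClusterPt p atTop y := by
  by_contra hcon
  push_neg at hcon
  apply h
  apply IsSeqCompact.isCompact
  intro v hv
  obtain ⟨p, hp⟩ := hcon v hv
  obtain ⟨φ, hφ, hten⟩ := TopologicalSpace.FirstCountableTopology.tendsto_subseq hp
  refine ⟨p, ?_, φ, hφ, hten⟩
  exact isClosed_closure.mem_of_tendsto hten (Eventually.of_forall fun k => hv (φ k))

/-- Key lemma: in a cofinally complete space, a sequence along which the local compactness
functional tends to zero has a cluster point. -/
lemma cluster_of_nu_small (h1 : CofinallyComplete X) (x : ℕ → X)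
    (hx : ∀ η : ℝ, 0 < η → ∀ᶠ n in atTop, nu (x n) < ENNReal.ofReal η) :
    ∃ p, MapClusterPt p atTop x := by
  obtain ⟨ψ, hψ, hψ'⟩ := Filter.extraction_forall_of_eventually
    (P := fun n k => nu (x k) < ENNReal.ofReal (1 / ((n : ℝ) + 1)))
    (fun n => hx (1 / ((n : ℝ) + 1)) (by positivity))
  have hnc : ∀ n : ℕ, ¬ IsCompact (closure (Metric.ball (x (ψ n)) (2 / ((n : ℝ) + 1)))) := by
    intro n hcpt
    have h2 : ENNReal.ofReal (2 / ((n : ℝ) + 1)) ≤ nu (x (ψ n)) := le_nu (by positivity) hcpt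
    have h3 : ENNReal.ofReal (1 / ((n : ℝ) + 1)) < ENNReal.ofReal (2 / ((n : ℝ) + 1)) := by
      rw [ENNReal.ofReal_lt_ofReal_iff (by positivity)]
      have h0 : (0:ℝ) < (n:ℝ) + 1 := by positivity
      rw [div_lt_div_iff₀ h0 h0]
      nlinarith
    exact lt_irrefl _ ((hψ' n).trans (lt_of_lt_of_le h3 h2))
  choose Y hYmem hYbad using fun n => exists_bad_seq (hnc n)
  have hYdist : ∀ n k, dist (Y n k) (x (ψ n)) ≤ 2 / ((n : ℝ) + 1) := fun n k =>
    Metric.mem_closedBall.mp (Metric.closure_ball_subset_closedBall (hYmem n k))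
  set z : ℕ → X := fun m => Y m.unpair.1 m.unpair.2 with hz
  have hzpair : ∀ n k, z (Nat.pair n k) = Y n k := by
    intro n k
    simp [hz, Nat.unpair_pair]
  have hcc : CofinallyCauchy z := by
    intro ε hε
    obtain ⟨n, hn⟩ := exists_nat_gt (4 / ε)
    refine ⟨Set.range (Nat.pair n),
      Set.infinite_range_of_injective (fun a b hab => (Nat.pair_eq_pair.mp hab).2), ?_⟩
    rintro m ⟨k, rfl⟩ m' ⟨k', rfl⟩
    rw [hzpair, hzpair]
    have h4 : (4 : ℝ) / ((n : ℝ) + 1) < ε := div_cast_lt hε (hn.trans (lt_add_one _))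
    calc dist (Y n k) (Y n k') ≤ dist (Y n k) (x (ψ n)) + dist (x (ψ n)) (Y n k') :=
          dist_triangle _ _ _
      _ ≤ 2 / ((n : ℝ) + 1) + 2 / ((n : ℝ) + 1) := by
          have := hYdist n k
          have h2 := hYdist n k'
          rw [dist_comm] at h2
          exact add_le_add this h2
      _ = 4 / ((n : ℝ) + 1) := by ring
      _ < ε := h4
  obtain ⟨p, hp⟩ := h1 z hcc
  refine ⟨p, ?_⟩
  by_contra hno
  have hno' : ¬ MapClusterPt p atTop fun n => x (ψ n) := fun h =>
    hno (MapClusterPt.of_comp (hψ.tendsto_atTop) h)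
  rw [mapClusterPt_seq_iff] at hno'
  push_neg at hno'
  obtain ⟨ε, hε, N, hN⟩ := hno'
  obtain ⟨N', hN'⟩ := exists_nat_gt (2 / (ε / 2))
  set M := max N (N' + 1) with hM
  have hMkey : ∀ m : ℕ, dist (z m) p < ε / 2 → m.unpair.1 < M := by
    intro m hm
    by_contra hge
    push_neg at hge
    set n := m.unpair.1 with hn
    set k := m.unpair.2 with hk
    have hnN : N ≤ n := le_trans (le_max_left _ _) hge
    have hnN' : N' + 1 ≤ n := le_trans (le_max_right _ _) hge
    have h2 : 2 / ((n : ℝ) + 1) < ε / 2 := by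
      apply div_cast_lt (by positivity)
      calc (2 : ℝ) / (ε / 2) < (N' : ℝ) + 1 := by exact_mod_cast hN'.trans (lt_add_one _)
        _ ≤ (n : ℝ) + 1 := by
            have : ((N' : ℝ) + 1) ≤ (n : ℝ) := by exact_mod_cast hnN'
            linarith
    have hdist1 : dist (x (ψ n)) (Y n k) ≤ 2 / ((n : ℝ) + 1) := by
      rw [dist_comm]; exact hYdist n k
    have hzm : z m = Y n k := rfl
    have := hN n hnN
    have htri : dist (x (ψ n)) p ≤ dist (x (ψ n)) (Y n k) + dist (Y n k) p :=
      dist_triangle _ _ _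
    rw [← hzm] at htri
    linarith
  set δ : ℕ → ℝ := fun j => min (ε / 2) (1 / ((j : ℝ) + 1)) with hδ
  have hδpos : ∀ j, 0 < δ j := fun j => lt_min (by positivity) (by positivity)
  have hδle : ∀ j, δ j ≤ ε / 2 := fun j => min_le_left _ _
  have hδanti : ∀ j j', j ≤ j' → δ j' ≤ δ j := by
    intro j j' h
    apply min_le_min le_rfl
    apply one_div_le_one_div_of_le (by positivity)
    have : (j : ℝ) ≤ (j' : ℝ) := by exact_mod_cast h
    linarith
  have hT : ∀ j, {m | dist (z m) p < δ j}.Infinite := by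
    intro j
    apply infinite_of_forall_exists_ge
    intro N0
    obtain ⟨mm, h1', h2'⟩ := (mapClusterPt_seq_iff.mp hp) (δ j) (hδpos j) N0
    exact ⟨mm, h1', h2'⟩
  have hfib : ∀ j, ∃ n < M, {k | dist (Y n k) p < δ j}.Infinite := by
    intro j
    by_contra hcon
    push_neg at hcon
    apply hT j
    have hsub : {m | dist (z m) p < δ j} ⊆
        (fun q : ℕ × ℕ => Nat.pair q.1 q.2) ''
          (⋃ n ∈ Set.Iio M, {n} ×ˢ {k | dist (Y n k) p < δ j}) := by
      intro m hm
      refine ⟨(m.unpair.1, m.unpair.2), ?_, by simp [Nat.pair_unpair]⟩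
      have hlt : m.unpair.1 < M := hMkey m (lt_of_lt_of_le hm (hδle j))
      simp only [Set.mem_iUnion, Set.mem_prod, Set.mem_singleton_iff, Set.mem_setOf_eq]
      exact ⟨m.unpair.1, hlt, rfl, hm⟩
    have hfin : ((fun q : ℕ × ℕ => Nat.pair q.1 q.2) ''
        (⋃ n ∈ Set.Iio M, {n} ×ˢ {k | dist (Y n k) p < δ j})).Finite := by
      apply Set.Finite.image
      apply (Set.finite_Iio M).biUnion
      intro n hn
      exact (Set.finite_singleton n).prod (hcon n hn)
    exact hfin.subset hsub
  choose g hgM hgInf using hfib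
  have hMpos : 0 < M := lt_of_le_of_lt (Nat.zero_le _) (hgM 0)
  set g' : ℕ → Fin M := fun j => ⟨g j, hgM j⟩ with hg'
  obtain ⟨n₀, hn₀⟩ := Finite.exists_infinite_fiber g'
  have hfibInf : (g' ⁻¹' {n₀} : Set ℕ).Infinite := Set.infinite_coe_iff.mp hn₀
  have hall : ∀ j, {k | dist (Y (n₀ : ℕ) k) p < δ j}.Infinite := by
    intro j
    obtain ⟨j', hj'mem, hj'⟩ := hfibInf.exists_gt j
    have hgj' : g j' = (n₀ : ℕ) := by
      have : g' j' = n₀ := hj'mem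
      exact congrArg Fin.val this
    have := hgInf j'
    rw [hgj'] at this
    exact this.mono fun k hk => lt_of_lt_of_le hk (hδanti j j' hj'.le)
  apply hYbad (n₀ : ℕ) p
  rw [mapClusterPt_seq_iff]
  intro ε'' hε'' N0
  obtain ⟨j, hj⟩ := exists_nat_gt (1 / ε'')
  have hδj : δ j < ε'' := by
    apply lt_of_le_of_lt (min_le_right _ _)
    exact div_cast_lt hε'' (hj.trans (lt_add_one _))
  obtain ⟨k, hkmem, hklt⟩ := (hall j).exists_gt N0
  exact ⟨k, hklt.le, lt_trans hkmem hδj⟩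

end Helpers

theorem cofinallyComplete_iff_strongUnifCont_on_ANLC {X : Type u} [MetricSpace X] :
    List.TFAE
      [CofinallyComplete X,
       ∀ (Y : Type v) [MetricSpace Y] (f : X → Y), Continuous f →
         ∀ A : Set X, ANLC A → StrongUnifContOn f A,
       ∀ (Y : Type v) [MetricSpace Y] (f : X → Y), Continuous f →
         ∀ A B : Set X, ANLC A → B.Nonempty → setGap A B = 0 →
           setGap (f '' A) (f '' B) = 0] := by
  tfae_have 1 → 2 := by
    intro h1 Y _ f hf A hA
    by_contra hsuc
    simp only [StrongUnifContOn] at hsuc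
    push_neg at hsuc
    obtain ⟨ε, hε, hbad⟩ := hsuc
    have hch : ∀ n : ℕ, ∃ q : X × X, q.1 ∈ A ∧ dist q.1 q.2 < 1 / ((n : ℝ) + 1) ∧
        ε ≤ dist (f q.1) (f q.2) := by
      intro n
      obtain ⟨x, y, hd, hmem, hfd⟩ := hbad (1 / ((n : ℝ) + 1)) (by positivity)
      rcases hmem with hx | hy
      · exact ⟨(x, y), hx, hd, hfd⟩
      · exact ⟨(y, x), hy, by rwa [dist_comm], by rwa [dist_comm (f x)] at hfd⟩
    choose q hq1 hq2 hq3 using hch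
    set a : ℕ → X := fun n => (q n).1 with ha
    set b : ℕ → X := fun n => (q n).2 with hb
    have key : ∃ p : X, ∃ g : ℕ → ℕ, Tendsto g atTop atTop ∧
        Tendsto (fun k => a (g k)) atTop (𝓝 p) := by
      by_cases hcase : ∃ η : ℝ, 0 < η ∧ {n | ENNReal.ofReal η ≤ nu (a n)}.Infinite
      · obtain ⟨η, hη, hinf⟩ := hcase
        have hK := hA.2.2 η hη
        set e := Set.Infinite.natEmbedding _ hinf with he
        obtain ⟨p, -, φ, hφ, hten⟩ := hK.tendsto_subseq (x := fun i => a ((e i : ℕ)))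
          (fun i => ⟨hq1 _, (e i).2⟩)
        refine ⟨p, fun k => ((e (φ k) : ℕ)), ?_, hten⟩
        have hinj : Function.Injective (fun i : ℕ => ((e (φ i) : ℕ))) := by
          intro i j hij
          exact hφ.injective (e.injective (Subtype.val_injective hij))
        exact hinj.nat_tendsto_atTop
      · push_neg at hcase
        have hev : ∀ η : ℝ, 0 < η → ∀ᶠ n in atTop, nu (a n) < ENNReal.ofReal η := by
          intro η hη
          have hfin : {n | ENNReal.ofReal η ≤ nu (a n)}.Finite :=
            hcase η hη
          rw [← Nat.cofinite_eq_atTop]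
          have := hfin.compl_mem_cofinite
          apply Filter.mem_of_superset this
          intro n hn
          simpa [not_le] using hn
        obtain ⟨p, hp⟩ := cluster_of_nu_small h1 a hev
        obtain ⟨φ, hφ, hten⟩ := TopologicalSpace.FirstCountableTopology.tendsto_subseq hp
        exact ⟨p, φ, hφ.tendsto_atTop, hten⟩
    obtain ⟨p, g, hg, hten⟩ := key
    have hd0 : Tendsto (fun k => dist (a (g k)) (b (g k))) atTop (𝓝 0) := by
      apply squeeze_zero (fun k => dist_nonneg) (fun k => (hq2 (g k)).le)
      exact tendsto_one_div_add_atTop_nhds_zero_nat.comp hg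
    have htenb : Tendsto (fun k => b (g k)) atTop (𝓝 p) := by
      rw [tendsto_iff_dist_tendsto_zero]
      apply squeeze_zero (fun k => dist_nonneg)
        (fun k => dist_triangle (b (g k)) (a (g k)) p)
      have h1' : Tendsto (fun k => dist (b (g k)) (a (g k))) atTop (𝓝 0) := by
        simpa [dist_comm] using hd0
      have h2' : Tendsto (fun k => dist (a (g k)) p) atTop (𝓝 0) :=
        tendsto_iff_dist_tendsto_zero.mp hten
      simpa using h1'.add h2'
    have hconv : Tendsto (fun k => dist (f (a (g k))) (f (b (g k)))) atTop
        (𝓝 (dist (f p) (f p))) :=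
      (((hf.tendsto p).comp hten)).dist (((hf.tendsto p).comp htenb))
    rw [dist_self] at hconv
    have := (hconv.eventually_lt_const hε).exists
    obtain ⟨k, hk⟩ := this
    exact absurd (hq3 (g k)) (not_le.mpr hk)
  tfae_have 2 → 3 := by
    intro h2 Y _ f hf A B hA hB hgap
    apply ennreal_eq_zero_of_forall
    intro ε hε
    obtain ⟨δ, hδ, hsuc⟩ := h2 Y f hf A hA ε hε
    have hlt : setGap A B < ENNReal.ofReal δ := by
      rw [hgap]; exact ENNReal.ofReal_pos.mpr hδ
    obtain ⟨x, hx, y, hy, hxy⟩ := setGap_lt hlt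
    have hd : dist x y < δ := by
      rwa [edist_dist, ENNReal.ofReal_lt_ofReal_iff hδ] at hxy
    have hfd := hsuc x y hd (Or.inl hx)
    calc setGap (f '' A) (f '' B) ≤ edist (f x) (f y) :=
          setGap_le ⟨x, hx, rfl⟩ ⟨y, hy, rfl⟩
      _ < ENNReal.ofReal ε := by
          rw [edist_dist]
          exact (ENNReal.ofReal_lt_ofReal_iff hε).mpr hfd
  tfae_have 3 → 1 := by
    intro h3 u hcc
    classical
    by_contra hno
    push_neg at hno
    have hno' : ∀ p : X, ¬ MapClusterPt p atTop u := hno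
    have hS : ∀ k : ℕ, ∃ S : Set ℕ, S.Infinite ∧
        ∀ m ∈ S, ∀ n ∈ S, dist (u m) (u n) < 1 / ((k : ℝ) + 1) :=
      fun k => hcc _ (by positivity)
    choose S hSinf hSd using hS
    have hV : ∀ k, (u '' S k).Infinite := by
      intro k
      by_contra hfin
      rw [Set.not_infinite] at hfin
      have hex : ∃ v ∈ u '' S k, {m | m ∈ S k ∧ u m = v}.Infinite := by
        by_contra hcon
        push_neg at hcon
        apply hSinf k
        have hsub : S k ⊆ ⋃ v ∈ u '' S k, {m | m ∈ S k ∧ u m = v} := by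
          intro m hm
          simp only [Set.mem_iUnion, Set.mem_setOf_eq]
          exact ⟨u m, ⟨m, hm, rfl⟩, hm, rfl⟩
        exact (hfin.biUnion fun v hv => hcon v hv).subset hsub
      obtain ⟨v, -, hvinf⟩ := hex
      apply hno' v
      rw [mapClusterPt_seq_iff]
      intro ε hε N
      obtain ⟨m, hmmem, hmlt⟩ := hvinf.exists_gt N
      exact ⟨m, hmlt.le, by rw [hmmem.2, dist_self]; exact hε⟩
    have hpick : ∀ (k : ℕ) (F : Finset X), ∃ pr : X × X, pr.1 ∈ u '' S k ∧ pr.2 ∈ u '' S k ∧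
        pr.1 ≠ pr.2 ∧ pr.1 ∉ F ∧ pr.2 ∉ F := by
      intro k F
      obtain ⟨v, hv⟩ := ((hV k).diff F.finite_toSet).nonempty
      obtain ⟨w, hw⟩ := ((hV k).diff (insert v F).finite_toSet).nonempty
      have hwF : w ∉ F := fun h => hw.2 (Finset.mem_coe.mpr (Finset.mem_insert_of_mem h))
      have hvw : v ≠ w := fun h =>
        hw.2 (Finset.mem_coe.mpr (h ▸ Finset.mem_insert_self v F))
      exact ⟨(v, w), hv.1, hw.1, hvw, hv.2, hwF⟩
    choose pick hp1 hp2 hp3 hp4 hp5 using hpick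
    set G : ℕ → Finset X := fun k =>
      Nat.rec ∅ (fun j Fj => Fj ∪ {(pick j Fj).1, (pick j Fj).2}) k with hG
    have hGsucc : ∀ k, G (k + 1) = G k ∪ {(pick k (G k)).1, (pick k (G k)).2} := fun k => rfl
    set P : ℕ → X × X := fun k => pick k (G k) with hP
    have hGmono : ∀ {j k : ℕ}, j ≤ k → G j ⊆ G k := by
      intro j k h
      exact monotone_nat_of_le_succ (f := G)
        (fun i => by rw [hGsucc i]; exact Finset.subset_union_left) h
    have hPmem : ∀ j k, j < k → (P j).1 ∈ G k ∧ (P j).2 ∈ G k := by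
      intro j k hjk
      have h1 : (P j).1 ∈ G (j + 1) := by
        rw [hGsucc j]
        simp [hP]
      have h2 : (P j).2 ∈ G (j + 1) := by
        rw [hGsucc j]
        simp [hP]
      exact ⟨hGmono hjk h1, hGmono hjk h2⟩
    have hne12 : ∀ j k, (P j).1 ≠ (P k).2 := by
      intro j k
      rcases lt_trichotomy j k with h | rfl | h
      · intro he
        exact hp5 k (G k) (he ▸ (hPmem j k h).1)
      · exact hp3 j (G j)
      · intro he
        exact hp4 j (G j) (he ▸ (hPmem k j h).2)
    set A : Set X := Set.range (fun k => (P k).1) with hAdef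
    set B : Set X := Set.range (fun k => (P k).2) with hBdef
    have hAB : Disjoint A B := by
      rw [Set.disjoint_left]
      rintro x ⟨j, rfl⟩ ⟨k, hk⟩
      exact hne12 j k hk.symm
    have hArange : A ⊆ Set.range u := by
      rintro x ⟨k, rfl⟩
      obtain ⟨m, -, hm⟩ := hp1 k (G k)
      exact ⟨m, hm⟩
    have hBrange : B ⊆ Set.range u := by
      rintro x ⟨k, rfl⟩
      obtain ⟨m, -, hm⟩ := hp2 k (G k)
      exact ⟨m, hm⟩
    have hAclosed : IsClosed A := isClosed_subset_range hno' hArange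
    have hBclosed : IsClosed B := isClosed_subset_range hno' hBrange
    have hdist : ∀ k, dist (P k).1 (P k).2 < 1 / ((k : ℝ) + 1) := by
      intro k
      obtain ⟨m, hm, hum⟩ := hp1 k (G k)
      obtain ⟨m', hm', hum'⟩ := hp2 k (G k)
      rw [← hum, ← hum']
      exact hSd k m hm m' hm'
    have hgap : setGap A B = 0 := by
      apply ennreal_eq_zero_of_forall
      intro ε hε
      obtain ⟨k, hk⟩ := exists_nat_gt (1 / ε)
      calc setGap A B ≤ edist (P k).1 (P k).2 := setGap_le ⟨k, rfl⟩ ⟨k, rfl⟩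
        _ < ENNReal.ofReal ε := by
            rw [edist_dist]
            rw [ENNReal.ofReal_lt_ofReal_iff hε]
            exact (hdist k).trans (div_cast_lt hε (hk.trans (lt_add_one _)))
    have hANLC : ANLC A := by
      refine ⟨⟨(P 0).1, Set.mem_range_self 0⟩, hAclosed, ?_⟩
      intro ε hε
      have hfin : {x | x ∈ A ∧ ENNReal.ofReal ε ≤ nu x}.Finite := by
        obtain ⟨Nb, hNb⟩ := exists_nat_gt (1 / ε)
        apply Set.Finite.subset (Set.Finite.image (fun k => (P k).1) (Set.finite_Iio Nb))
        rintro x ⟨⟨k, rfl⟩, hx⟩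
        refine ⟨k, ?_, rfl⟩
        by_contra hk
        simp only [Set.mem_Iio, not_lt] at hk
        have hlt : (1 : ℝ) / ((k : ℝ) + 1) < ε := by
          apply div_cast_lt hε
          calc (1 : ℝ) / ε < (Nb : ℝ) := hNb
            _ ≤ (k : ℝ) := by
                have : Nb ≤ k := not_lt.mp (by simpa using hk)
                exact_mod_cast this
            _ < (k : ℝ) + 1 := lt_add_one _
        have h1 : ENNReal.ofReal (1 / ((k : ℝ) + 1)) < nu ((P k).1) :=
          lt_of_lt_of_le ((ENNReal.ofReal_lt_ofReal_iff hε).mpr hlt) hx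
        obtain ⟨r, hr, hrc, hrlt⟩ := exists_of_lt_nu h1
        have hr2 : 1 / ((k : ℝ) + 1) < r := by
          rwa [ENNReal.ofReal_lt_ofReal_iff hr] at hrlt
        obtain ⟨m₀, hm₀, hum₀⟩ := hp1 k (G k)
        have hmem : ∀ m ∈ S k, u m ∈ closure (Metric.ball ((P k).1) r) := by
          intro m hm
          apply subset_closure
          rw [Metric.mem_ball, ← hum₀]
          exact (hSd k m hm m₀ hm₀).trans hr2
        obtain ⟨p, hp⟩ := cluster_of_infinite_in_compact (hSinf k) hrc hmem
        exact hno' p hp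
      exact hfin.isCompact
    obtain ⟨φf, hφ0, hφ1, -⟩ := exists_continuous_zero_one_of_isClosed hAclosed hBclosed hAB
    set gf : X → ULift.{v} ℝ := fun x => ULift.up (φf x) with hgf
    have hgcont : Continuous gf := continuous_uliftUp.comp φf.continuous
    have hres := h3 (ULift.{v} ℝ) gf hgcont A B hANLC ⟨(P 0).2, Set.mem_range_self 0⟩ hgap
    have hlt : setGap (gf '' A) (gf '' B) < ENNReal.ofReal 1 := by
      rw [hres]
      simp
    obtain ⟨ya, ⟨xa, hxa, rfl⟩, yb, ⟨xb, hxb, rfl⟩, hedist⟩ := setGap_lt hlt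
    have h0 : φf xa = 0 := hφ0 hxa
    have h1 : φf xb = 1 := hφ1 hxb
    have heq : edist (gf xa) (gf xb) = ENNReal.ofReal 1 := by
      rw [edist_dist]
      congr 1
      have : dist (gf xa) (gf xb) = dist (φf xa) (φf xb) := rfl
      rw [this, h0, h1]
      simp [Real.dist_eq]
    rw [heq] at hedist
    exact lt_irrefl _ hedist
  tfae_finish
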